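/- Let B_N ≥ 1 and B_D ≥ 1 be integers, set B = B_N + B_D, and let L_1,…,L_{B_N} (Neumann-node bond lengths) and ℓ_1,…,ℓ_{B_D} (Dirichlet-node bond lengths) be positive reals. Define G : ℂ → ℂ by G(s) = (2^{2s} − 1)·ζ(2s)·∑_{n=1}^{B_N} (π/L_n)^{−2s} + ζ(2s)·∑_{d=1}^{B_D} (π/ℓ_d)^{−2s}. Then the derivative of G at s = 0 equals −log( 2^B · ∏_{d=1}^{B_D} ℓ_d ). (This is the pole contribution ζ'_P(0) for the star graph with mixed Dirichlet and Neumann nodes.) -/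

import Mathlib

open Real Complex BigOperators Filter Topology

noncomputable def Zaux : ℂ → ℂ := fun s => if s = 1 then (Real.eulerMascheroniConstant : ℂ) else riemannZeta s - 1 / (s - 1)

lemma Zaux_diff : DifferentiableAt ℂ Zaux 1 := by
  have hd : ∀ᶠ z in 𝓝[≠] (1:ℂ), DifferentiableAt ℂ Zaux z := by
    filter_upwards [self_mem_nhdsWithin] with z hz
    have hz' : z ≠ 1 := hz
    have heq : Zaux =ᶠ[𝓝 z] (fun s => riemannZeta s - 1 / (s - 1)) := by
      filter_upwards [isOpen_ne.mem_nhds hz'] with w hw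
      simp [Zaux, if_neg hw]
    refine DifferentiableAt.congr_of_eventuallyEq ?_ heq
    exact (differentiableAt_riemannZeta hz').sub
      ((differentiableAt_const _).div (differentiableAt_id.sub_const 1) (sub_ne_zero.mpr hz'))
  have hc : ContinuousAt Zaux 1 := by
    rw [ContinuousAt, ← nhdsNE_sup_pure]
    refine Tendsto.sup ?_ ?_
    · have h1 : Zaux 1 = (Real.eulerMascheroniConstant : ℂ) := by simp [Zaux]
      rw [h1]
      refine tendsto_riemannZeta_sub_one_div.congr' ?_
      filter_upwards [self_mem_nhdsWithin] with z hz
      simp [Zaux, if_neg (show z ≠ 1 from hz)]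
    · simpa [Zaux] using tendsto_pure_nhds Zaux 1
  exact (Complex.analyticAt_of_differentiable_on_punctured_nhds_of_continuousAt hd hc).differentiableAt

noncomputable def qaux : ℂ → ℂ := fun s => if s = 0 then ((Real.pi : ℂ) / 2) else Complex.sin (Real.pi * s / 2) / s

lemma qaux_diff : DifferentiableAt ℂ qaux 0 := by
  have hd : ∀ᶠ z in 𝓝[≠] (0:ℂ), DifferentiableAt ℂ qaux z := by
    filter_upwards [self_mem_nhdsWithin] with z hz
    have hz' : z ≠ 0 := hz
    have heq : (fun s => Complex.sin (Real.pi * s / 2) / s) =ᶠ[𝓝 z] qaux := by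
      filter_upwards [isOpen_ne.mem_nhds hz'] with w hw
      simp [qaux, if_neg hw]
    refine DifferentiableAt.congr_of_eventuallyEq ?_ heq.symm
    exact (Complex.differentiable_sin.differentiableAt.comp z
      (((differentiable_id.const_mul _).div_const _).differentiableAt)).div differentiableAt_id hz'
  have hsin : HasDerivAt (fun s : ℂ => Complex.sin (Real.pi * s / 2)) ((Real.pi : ℂ) / 2) 0 := by
    have h0 : HasDerivAt (fun s : ℂ => (Real.pi : ℂ) * s / 2) ((Real.pi : ℂ) / 2) 0 := by
      simpa using ((hasDerivAt_id (0:ℂ)).const_mul (Real.pi : ℂ)).div_const 2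
    have := (Complex.hasDerivAt_sin ((Real.pi : ℂ) * 0 / 2)).comp 0 h0
    simpa [Function.comp_def] using this
  have hc : ContinuousAt qaux 0 := by
    rw [ContinuousAt, ← nhdsNE_sup_pure]
    refine Tendsto.sup ?_ ?_
    · have h1 : qaux 0 = ((Real.pi : ℂ) / 2) := by simp [qaux]
      rw [h1]
      have := hasDerivAt_iff_tendsto_slope.mp hsin
      refine this.congr' ?_
      filter_upwards [self_mem_nhdsWithin] with z hz
      have hz' : z ≠ 0 := hz
      simp [slope_def_field, qaux, if_neg hz', Complex.sin_zero]
    · simpa [qaux] using tendsto_pure_nhds qaux 0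
  exact (Complex.analyticAt_of_differentiable_on_punctured_nhds_of_continuousAt hd hc).differentiableAt

lemma qaux_even (s : ℂ) : qaux (-s) = qaux s := by
  rcases eq_or_ne s 0 with rfl | hs
  · simp
  · have : (-s) ≠ 0 := neg_ne_zero.mpr hs
    simp only [qaux, if_neg hs, if_neg this]
    rw [show (Real.pi : ℂ) * -s / 2 = -((Real.pi : ℂ) * s / 2) by ring, Complex.sin_neg,
      neg_div_neg_eq]

lemma qaux_deriv_zero : HasDerivAt qaux 0 0 := by
  have hd := qaux_diff
  have h1 : deriv qaux 0 = 0 := by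
    have hneg : deriv (fun s => qaux (-s)) 0 = -deriv qaux 0 := by
      have hq0 : HasDerivAt qaux (deriv qaux 0) (-0 : ℂ) := by
        simpa using hd.hasDerivAt
      have := (hq0.comp 0 (hasDerivAt_neg (0:ℂ))).deriv
      simpa [Function.comp_def] using this
    have heq : (fun s => qaux (-s)) = qaux := funext qaux_even
    rw [heq] at hneg
    have : (2:ℂ) * deriv qaux 0 = 0 := by linear_combination hneg
    simpa using this
  simpa [h1] using hd.hasDerivAt

lemma zeta_hasDerivAt_zero :
    HasDerivAt riemannZeta (-(Real.log (2 * Real.pi)) / 2 : ℂ) 0 := by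
  set γ := Real.eulerMascheroniConstant
  set k : ℂ → ℂ := fun s => Zaux (1 - s) with hk_def
  set Φ : ℂ → ℂ := fun s =>
    Complex.Gammaℂ (1 - s) * (Complex.sin (Real.pi * s / 2) * k s - qaux s) with hΦ_def
  have hπ : (Real.pi : ℂ) ≠ 0 := Complex.ofReal_ne_zero.mpr Real.pi_ne_zero
  have hk : HasDerivAt k (-deriv Zaux 1) 0 := by
    have h1 : HasDerivAt (fun s : ℂ => 1 - s) (-1) 0 := by
      simpa using (hasDerivAt_id (0:ℂ)).const_sub 1
    have h2 : HasDerivAt Zaux (deriv Zaux 1) ((1:ℂ) - 0) := by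
      simpa using Zaux_diff.hasDerivAt
    simpa [Function.comp_def, hk_def] using h2.comp 0 h1
  have hk0 : k 0 = (γ : ℂ) := by simp [hk_def, Zaux, γ]
  have hA : HasDerivAt (fun s : ℂ => Complex.Gammaℂ (1 - s))
      (((γ : ℂ) + Complex.log (2 * Real.pi)) / Real.pi) 0 := by
    have h1 : HasDerivAt (fun s : ℂ => 1 - s) (-1) 0 := by
      simpa using (hasDerivAt_id (0:ℂ)).const_sub 1
    have h2 : HasDerivAt Complex.Gammaℂ
        (-((γ : ℂ) + Complex.log (2 * Real.pi)) / Real.pi) ((1:ℂ) - 0) := by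
      simpa using Complex.hasDerivAt_Gammaℂ_one
    have := h2.comp 0 h1
    refine this.congr_deriv ?_
    ring
  have hsin : HasDerivAt (fun s : ℂ => Complex.sin (Real.pi * s / 2)) ((Real.pi : ℂ) / 2) 0 := by
    have h0 : HasDerivAt (fun s : ℂ => (Real.pi : ℂ) * s / 2) ((Real.pi : ℂ) / 2) 0 := by
      simpa using ((hasDerivAt_id (0:ℂ)).const_mul (Real.pi : ℂ)).div_const 2
    have := (Complex.hasDerivAt_sin ((Real.pi : ℂ) * 0 / 2)).comp 0 h0
    simpa [Function.comp_def] using this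
  have hg : HasDerivAt (fun s : ℂ => Complex.sin (Real.pi * s / 2) * k s - qaux s)
      ((Real.pi : ℂ) / 2 * k 0 + Complex.sin (Real.pi * 0 / 2) * (-deriv Zaux 1) - 0) 0 :=
    (hsin.mul hk).sub qaux_deriv_zero
  have hΦ : HasDerivAt Φ
      (((γ : ℂ) + Complex.log (2 * Real.pi)) / Real.pi *
          (Complex.sin (Real.pi * 0 / 2) * k 0 - qaux 0) +
        Complex.Gammaℂ (1 - 0) *
          ((Real.pi : ℂ) / 2 * k 0 + Complex.sin (Real.pi * 0 / 2) * (-deriv Zaux 1) - 0)) 0 :=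
    hA.mul hg
  have heq : riemannZeta =ᶠ[𝓝 (0:ℂ)] Φ := by
    filter_upwards [Metric.ball_mem_nhds (0:ℂ) one_pos] with s hs
    rcases eq_or_ne s 0 with rfl | hs0
    · have : Φ 0 = -1/2 := by
        simp only [hΦ_def, hk0]
        rw [show (Real.pi : ℂ) * 0 / 2 = 0 by ring, Complex.sin_zero, sub_zero,
          Complex.Gammaℂ_one]
        simp [qaux]
        field_simp
      rw [riemannZeta_zero, this]
    · have h1 : ∀ n : ℕ, (1 : ℂ) - s ≠ -n := by
        intro n hn
        have : s = 1 + n := by linear_combination -hn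
        rw [this] at hs
        simp only [Metric.mem_ball, dist_zero_right] at hs
        have : (1:ℝ) ≤ ‖(1 + (n:ℂ))‖ := by
          have : ‖(1 + (n:ℂ))‖ = 1 + n := by
            rw [show (1 + (n:ℂ)) = ((1 + n : ℝ) : ℂ) by push_cast; ring]
            rw [Complex.norm_real, Real.norm_of_nonneg (by positivity)]
          rw [this]; linarith [Nat.cast_nonneg (α := ℝ) n]
        linarith
      have h2 : (1 : ℂ) - s ≠ 1 := fun h => hs0 (by linear_combination -h)
      have hfe := riemannZeta_one_sub h1 h2
      rw [show (1:ℂ) - (1 - s) = s by ring] at hfe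
      have hζ1s : riemannZeta (1 - s) = k s - 1/s := by
        have : k s = riemannZeta (1 - s) - 1 / ((1 - s) - 1) := by
          simp only [hk_def, Zaux, if_neg h2]
        have hks : k s = riemannZeta (1 - s) + 1/s := by
          rw [this, show ((1:ℂ) - s) - 1 = -s by ring, div_neg, sub_neg_eq_add]
        linear_combination -hks
      have hcos : Complex.cos ((Real.pi : ℂ) * (1 - s) / 2) =
          Complex.sin ((Real.pi : ℂ) * s / 2) := by
        rw [show (Real.pi : ℂ) * (1 - s) / 2 = (Real.pi : ℂ)/2 - (Real.pi : ℂ) * s / 2 by ring,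
          Complex.cos_pi_div_two_sub]
      have hq : qaux s = Complex.sin (Real.pi * s / 2) / s := by simp [qaux, if_neg hs0]
      rw [hfe, hζ1s, hcos]
      simp only [hΦ_def, Complex.Gammaℂ_def, hq]
      rw [show -((1:ℂ) - s) = -(1-s) by ring]
      field_simp
  have hζ := hΦ.congr_of_eventuallyEq heq
  refine hζ.congr_deriv ?_
  rw [hk0, show (Real.pi : ℂ) * 0 / 2 = 0 by ring, Complex.sin_zero,
    show (1:ℂ) - 0 = 1 by ring, Complex.Gammaℂ_one]
  rw [show qaux 0 = (Real.pi : ℂ)/2 by simp [qaux]]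
  rw [show ((Real.log (2 * Real.pi) : ℝ) : ℂ) = Complex.log (2 * Real.pi) by
    rw [Complex.ofReal_log Real.two_pi_pos.le]; push_cast; ring_nf]
  field_simp
  ring

lemma cpow_hasDeriv_aux (x : ℝ) (hx : 0 < x) :
    HasDerivAt (fun s : ℂ => ((x : ℝ) : ℂ) ^ (-2 * s)) (-2 * (Real.log x : ℂ)) 0 := by
  have hx0 : ((x : ℝ) : ℂ) ≠ 0 := Complex.ofReal_ne_zero.mpr hx.ne'
  have hf : HasDerivAt (fun s : ℂ => -2 * s) (-2 : ℂ) 0 := by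
    simpa using (hasDerivAt_id (0:ℂ)).const_mul (-2 : ℂ)
  have := hf.const_cpow (c := ((x : ℝ) : ℂ)) (Or.inl hx0)
  simp only [mul_zero, Complex.cpow_zero, one_mul] at this
  rwa [Complex.ofReal_log hx.le, mul_comm]



/-- with
`G(s) = (2^{2s}−1)ζ(2s)∑_n (π/L_n)^{−2s} + ζ(2s)∑_d (π/ℓ_d)^{−2s}`, the pole contribution
for a star graph with `B_N` Neumann and `B_D` Dirichlet nodes (`B = B_N + B_D`) satisfies
`G'(0) = −log(2^B ∏_d ℓ_d)`. -/

theorem mixed_star_pole_deriv_zero (BN BD : ℕ) (hBN : 1 ≤ BN) (hBD : 1 ≤ BD)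
    (B : ℕ) (hB : B = BN + BD)
    (L : Fin BN → ℝ) (hL : ∀ n, 0 < L n)
    (ℓ : Fin BD → ℝ) (hℓ : ∀ d, 0 < ℓ d) :
    deriv (fun s : ℂ =>
        ((2 : ℂ) ^ (2 * s) - 1) * riemannZeta (2 * s) *
            (∑ n : Fin BN, ((Real.pi / L n : ℝ) : ℂ) ^ (-2 * s)) +
          riemannZeta (2 * s) *
            (∑ d : Fin BD, ((Real.pi / ℓ d : ℝ) : ℂ) ^ (-2 * s))) 0 =
      -(Real.log (2 ^ B * ∏ d : Fin BD, ℓ d) : ℂ) := by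
  -- derivative of 2^(2s) - 1
  have h2 : ((2:ℝ) : ℂ) = (2 : ℂ) := by norm_num
  have hf1 : HasDerivAt (fun s : ℂ => (2 : ℂ) ^ (2 * s) - 1) (2 * (Real.log 2 : ℂ)) 0 := by
    have hg : HasDerivAt (fun s : ℂ => 2 * s) (2 : ℂ) 0 := by
      simpa using (hasDerivAt_id (0:ℂ)).const_mul (2 : ℂ)
    have := hg.const_cpow (c := (2:ℂ)) (Or.inl two_ne_zero)
    simp only [mul_zero, Complex.cpow_zero, one_mul] at this
    have h := this.sub_const 1
    rwa [show Complex.log 2 * 2 = 2 * (Real.log 2 : ℂ) by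
      rw [← h2, ← Complex.ofReal_log (by norm_num : (0:ℝ) ≤ 2)]; ring] at h
  -- derivative of ζ(2s)
  have hz2 : HasDerivAt (fun s : ℂ => riemannZeta (2 * s)) (-(Real.log (2 * Real.pi) : ℂ)) 0 := by
    have hg : HasDerivAt (fun s : ℂ => 2 * s) (2 : ℂ) 0 := by
      simpa using (hasDerivAt_id (0:ℂ)).const_mul (2 : ℂ)
    have hz : HasDerivAt riemannZeta (-(Real.log (2 * Real.pi)) / 2 : ℂ) ((2:ℂ) * 0) := by
      simpa using zeta_hasDerivAt_zero
    have := hz.comp 0 hg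
    refine this.congr_deriv ?_
    field_simp
  have hS1 : HasDerivAt (fun s : ℂ => ∑ n : Fin BN, ((Real.pi / L n : ℝ) : ℂ) ^ (-2 * s))
      (∑ n : Fin BN, (-2 * (Real.log (Real.pi / L n) : ℂ))) 0 :=
    HasDerivAt.fun_sum fun n _ => cpow_hasDeriv_aux _ (div_pos Real.pi_pos (hL n))
  have hS2 : HasDerivAt (fun s : ℂ => ∑ d : Fin BD, ((Real.pi / ℓ d : ℝ) : ℂ) ^ (-2 * s))
      (∑ d : Fin BD, (-2 * (Real.log (Real.pi / ℓ d) : ℂ))) 0 :=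
    HasDerivAt.fun_sum fun d _ => cpow_hasDeriv_aux _ (div_pos Real.pi_pos (hℓ d))
  -- values at 0
  have hv1 : ((2:ℂ) ^ (2 * (0:ℂ)) - 1) = 0 := by
    rw [mul_zero, Complex.cpow_zero]; ring
  have hvz : riemannZeta (2 * (0:ℂ)) = -1/2 := by rw [mul_zero, riemannZeta_zero]
  have hvS1 : (∑ n : Fin BN, ((Real.pi / L n : ℝ) : ℂ) ^ (-2 * (0:ℂ))) = (BN : ℂ) := by
    simp [Finset.card_univ]
  have hvS2 : (∑ d : Fin BD, ((Real.pi / ℓ d : ℝ) : ℂ) ^ (-2 * (0:ℂ))) = (BD : ℂ) := by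
    simp [Finset.card_univ]
  have hD := ((hf1.fun_mul hz2).fun_mul hS1).fun_add (hz2.fun_mul hS2)
  rw [hD.deriv]
  rw [hv1, hvz, hvS1, hvS2]
  -- now pure algebra with real logs
  have hlog2pi : Real.log (2 * Real.pi) = Real.log 2 + Real.log Real.pi :=
    Real.log_mul two_ne_zero Real.pi_ne_zero
  have hlogdiv : ∀ d : Fin BD, Real.log (Real.pi / ℓ d) = Real.log Real.pi - Real.log (ℓ d) :=
    fun d => Real.log_div Real.pi_ne_zero (hℓ d).ne'
  have hRHS : Real.log (2 ^ B * ∏ d : Fin BD, ℓ d) =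
      B * Real.log 2 + ∑ d : Fin BD, Real.log (ℓ d) := by
    rw [Real.log_mul (pow_ne_zero _ two_ne_zero) (Finset.prod_pos fun d _ => hℓ d).ne',
      Real.log_pow,
      Real.log_prod (fun d _ => (hℓ d).ne')]
  rw [hRHS]
  have hsum2 : (∑ d : Fin BD, (-2 * ((Real.log (Real.pi / ℓ d) : ℝ) : ℂ))) =
      (BD : ℂ) * (-2 * ((Real.log Real.pi : ℝ) : ℂ)) +
        2 * (∑ d : Fin BD, ((Real.log (ℓ d) : ℝ) : ℂ)) := by
    have hterm : ∀ d : Fin BD, (-2 * ((Real.log (Real.pi / ℓ d) : ℝ) : ℂ)) =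
        -2 * ((Real.log Real.pi : ℝ) : ℂ) + 2 * ((Real.log (ℓ d) : ℝ) : ℂ) := by
      intro d; rw [hlogdiv d]; push_cast; ring
    rw [Finset.sum_congr rfl (fun d _ => hterm d), Finset.sum_add_distrib,
      Finset.sum_const, Finset.card_univ, Fintype.card_fin, ← Finset.mul_sum]
    push_cast
    ring
  rw [hsum2]
  push_cast [hlog2pi, hB]
  ring
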